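/- Let f, g ∈ ℤ[x] be polynomials with coefficients bounded in absolute value by C ≥ 1. If β is an integer with β ≥ √(2C), and f(β) = g(β) and f(β+1) = g(β+1), then f = g. -/

import Mathlib

open Polynomial

theorem stmt5 (f g : Polynomial ℤ) (C β : ℤ) (hC1 : 1 ≤ C)
    (hfC : ∀ i, |f.coeff i| ≤ C) (hgC : ∀ i, |g.coeff i| ≤ C)
    (hβ : (β : ℝ) ≥ Real.sqrt (2 * (C : ℝ)))
    (heq1 : f.eval β = g.eval β) (heq2 : f.eval (β + 1) = g.eval (β + 1)) :
    f = g := by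
  by_contra hne
  set h : Polynomial ℤ := f - g with hh
  have hne' : h ≠ 0 := sub_ne_zero.mpr hne
  have hβ2 : 2 * C ≤ β ^ 2 := by
    have h0 : (0:ℝ) ≤ 2 * (C:ℝ) := by positivity
    have hs := Real.sq_sqrt h0
    have hnn := Real.sqrt_nonneg (2 * (C:ℝ))
    have : (2 * C : ℝ) ≤ (β:ℝ) ^ 2 := by nlinarith
    exact_mod_cast this
  have hβ1 : 1 ≤ β := by
    by_contra hb
    push_neg at hb
    have hb' : (β:ℝ) ≤ 0 := by exact_mod_cast (by omega : β ≤ 0)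
    have hs : (0:ℝ) < Real.sqrt (2 * (C:ℝ)) := Real.sqrt_pos.mpr (by positivity)
    linarith
  have hr1 : h.IsRoot β := by simp [hh, IsRoot, heq1]
  have hr2 : h.IsRoot (β + 1) := by simp [hh, IsRoot, heq2]
  obtain ⟨q1, hq1⟩ := dvd_iff_isRoot.mpr hr1
  have hq1root : q1.IsRoot (β + 1) := by
    have h2 := hr2
    rw [hq1] at h2
    simp only [IsRoot, eval_mul, eval_sub, eval_X, eval_C] at h2 ⊢
    have : (β + 1 - β : ℤ) = 1 := by ring
    rw [this, one_mul] at h2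
    exact h2
  obtain ⟨q, hq2⟩ := dvd_iff_isRoot.mpr hq1root
  have hq : h = ((X - Polynomial.C β) * (X - Polynomial.C (β + 1))) * q := by
    rw [hq1, hq2]; ring
  have hqne : q ≠ 0 := by
    rintro rfl
    simp at hq
    exact hne' hq
  set m := q.natTrailingDegree with hm
  have hqm : q.coeff m ≠ 0 := trailingCoeff_nonzero_iff_nonzero.mpr hqne
  have key : h.coeff m = (β * (β + 1)) * q.coeff m := by
    rw [hq, coeff_mul]
    rw [Finset.sum_eq_single (0, m)]
    · have : ((X - Polynomial.C β) * (X - Polynomial.C (β + 1))).coeff 0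
        = β * (β + 1) := by
        rw [mul_coeff_zero]
        simp
        ring
      rw [this]
    · rintro ⟨i, j⟩ hij hne2
      simp only [Finset.HasAntidiagonal.mem_antidiagonal] at hij
      have hj : j < m := by
        rcases lt_or_ge j m with hlt | hge
        · exact hlt
        · exfalso
          have : j = m := by omega
          subst this
          have : i = 0 := by omega
          subst this
          exact hne2 rfl
      rw [coeff_eq_zero_of_lt_natTrailingDegree hj, mul_zero]
    · intro habs
      exfalso
      exact habs (Finset.HasAntidiagonal.mem_antidiagonal.mpr (by omega))
  have hbound : |h.coeff m| ≤ 2 * C := by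
    calc |h.coeff m| = |f.coeff m - g.coeff m| := by rw [hh]; simp
    _ ≤ |f.coeff m| + |g.coeff m| := abs_sub _ _
    _ ≤ C + C := add_le_add (hfC m) (hgC m)
    _ = 2 * C := by ring
  have h1 : 1 ≤ |q.coeff m| := Int.one_le_abs hqm
  have h2 : |h.coeff m| = (β * (β + 1)) * |q.coeff m| := by
    rw [key, abs_mul]
    congr 1
    rw [abs_of_nonneg]
    nlinarith
  nlinarith [h1, h2, hbound, hβ2, hβ1]
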